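/- Let M be a G-invariant MDP with discount 0 ≤ γ < 1 and bounded reward. Then the optimal state-action value function Q* satisfies Q*(g·s, g·a) = Q*(s, a) for all g ∈ G, s ∈ S, a ∈ A. -/
import Mathlib


open MeasureTheory

lemma abs_ciSup_sub_ciSup {ι : Type*} [Nonempty ι] (f h : ι → ℝ)
    (hf : BddAbove (Set.range f)) (hh : BddAbove (Set.range h))
    (c : ℝ) (hc : ∀ i, |f i - h i| ≤ c) :
    |(⨆ i, f i) - ⨆ i, h i| ≤ c := by
  rw [abs_sub_le_iff]
  constructor
  · rw [sub_le_iff_le_add]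
    refine ciSup_le fun i => ?_
    have := (abs_le.1 (hc i)).2
    have := le_ciSup hh i
    linarith
  · rw [sub_le_iff_le_add]
    refine ciSup_le fun i => ?_
    have := (abs_le.1 (hc i)).1
    have := le_ciSup hf i
    linarith

/-- In a `G`-invariant MDP, the optimal state-action value function (the unique
bounded fixed point of the Bellman optimality operator) is `G`-invariant. -/
theorem optimal_Q_invariant {G S A : Type*} [Group G]
    [MulAction G S] [MulAction G A] [MeasurableSpace S]
    (hmeas : ∀ g : G, Measurable (fun s : S => g • s))
    (P : S → A → Measure S) (hprob : ∀ s a, IsProbabilityMeasure (P s a))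
    (r : S → A → ℝ)
    (hP : ∀ (g : G) (s : S) (a : A),
      P (g • s) (g • a) = Measure.map (fun s' : S => g • s') (P s a))
    (hr : ∀ (g : G) (s : S) (a : A), r (g • s) (g • a) = r s a)
    (γ : ℝ) (hγ0 : 0 ≤ γ) (hγ1 : γ < 1)
    (Q : S → A → ℝ) (CQ : ℝ) (hQbdd : ∀ s a, |Q s a| ≤ CQ)
    (hQmeas : Measurable (fun s' : S => ⨆ a' : A, Q s' a'))
    (hbellman : ∀ s a, Q s a = r s a + γ * ∫ s', (⨆ a' : A, Q s' a') ∂(P s a)) :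
    ∀ (g : G) (s : S) (a : A), Q (g • s) (g • a) = Q s a := by
  intro g s a
  have hA : Nonempty A := ⟨a⟩
  have hG : Nonempty G := ⟨g⟩
  have hS : Nonempty S := ⟨s⟩
  set F : S → ℝ := fun s' => ⨆ a' : A, Q s' a' with hF
  -- range of Q x is bounded above
  have hbddQ : ∀ x : S, BddAbove (Set.range (Q x)) :=
    fun x => ⟨CQ, by rintro _ ⟨a', rfl⟩; exact (abs_le.1 (hQbdd x a')).2⟩
  -- reindexing the sup by the bijection a' ↦ g • a'
  have hreindex : ∀ (g : G) (x : S), F x = ⨆ a' : A, Q x (g • a') := by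
    intro g x
    have hrange : Set.range (fun a' : A => Q x (g • a')) = Set.range (Q x) :=
      Function.Surjective.range_comp (fun b : A => ⟨g⁻¹ • b, smul_inv_smul g b⟩) (Q x)
    rw [hF]
    simp only [iSup]
    rw [hrange]
  -- bound on F
  have hFbd : ∀ x : S, |F x| ≤ CQ := by
    intro x
    rw [abs_le]
    constructor
    · exact le_trans (abs_le.1 (hQbdd x (Classical.arbitrary A))).1
        (le_ciSup (hbddQ x) _)
    · exact ciSup_le fun a' => (abs_le.1 (hQbdd x a')).2
  -- the invariance defect
  set d : ℝ := ⨆ p : G × S × A, |Q (p.1 • p.2.1) (p.1 • p.2.2) - Q p.2.1 p.2.2| with hd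
  have hdbdd : BddAbove (Set.range fun p : G × S × A =>
      |Q (p.1 • p.2.1) (p.1 • p.2.2) - Q p.2.1 p.2.2|) := by
    refine ⟨2 * CQ, ?_⟩
    rintro _ ⟨⟨g', s', a'⟩, rfl⟩
    calc |Q (g' • s') (g' • a') - Q s' a'|
        ≤ |Q (g' • s') (g' • a')| + |Q s' a'| := abs_sub _ _
      _ ≤ 2 * CQ := by linarith [hQbdd (g' • s') (g' • a'), hQbdd s' a']
  have hdle : ∀ (g : G) (s : S) (a : A), |Q (g • s) (g • a) - Q s a| ≤ d :=
    fun g s a => le_ciSup hdbdd (⟨g, s, a⟩ : G × S × A)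
  have hd0 : 0 ≤ d := le_trans (abs_nonneg _) (hdle g s a)
  -- key contraction estimate
  have hkey : ∀ (g : G) (s : S) (a : A), |Q (g • s) (g • a) - Q s a| ≤ γ * d := by
    intro g s a
    have hint1 : Integrable (fun s' => F (g • s')) (P s a) := by
      refine (integrable_const CQ).mono' ((hQmeas.comp (hmeas g)).aestronglyMeasurable) ?_
      filter_upwards with x
      simpa using hFbd (g • x)
    have hint2 : Integrable F (P s a) := by
      refine (integrable_const CQ).mono' hQmeas.aestronglyMeasurable ?_
      filter_upwards with x
      simpa using hFbd x
    have hQb : Q (g • s) (g • a) = r s a + γ * ∫ s', F (g • s') ∂(P s a) := by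
      rw [hbellman (g • s) (g • a), hP, hr]
      rw [integral_map (hmeas g).aemeasurable hQmeas.aestronglyMeasurable]
    have hdiff : Q (g • s) (g • a) - Q s a
        = γ * ∫ s', (F (g • s') - F s') ∂(P s a) := by
      rw [integral_sub hint1 hint2, hQb, hbellman s a]
      ring
    rw [hdiff, abs_mul, abs_of_nonneg hγ0]
    refine mul_le_mul_of_nonneg_left ?_ hγ0
    have hμ : (P s a) Set.univ = 1 := (hprob s a).measure_univ
    have := norm_integral_le_of_norm_le_const (μ := P s a) (C := d)
      (f := fun s' => F (g • s') - F s') ?_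
    · simpa [hμ] using this
    · filter_upwards with x
      rw [Real.norm_eq_abs]
      have h1 : F (g • x) = ⨆ a' : A, Q (g • x) (g • a') := hreindex g (g • x)
      rw [h1]
      exact abs_ciSup_sub_ciSup _ _
        (⟨CQ, by rintro _ ⟨a', rfl⟩; exact (abs_le.1 (hQbdd _ _)).2⟩)
        (hbddQ x) d (fun a' => hdle g x a')
  have hcontr : d ≤ γ * d :=
    ciSup_le fun p => hkey p.1 p.2.1 p.2.2
  have hdzero : d ≤ 0 := by nlinarith
  have := hdle g s a
  have : |Q (g • s) (g • a) - Q s a| ≤ 0 := le_trans this hdzero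
  have := abs_nonpos_iff.1 this
  linarith [sub_eq_zero.1 this]
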